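/- Let γ ∈ (0,1), let f be locally Lipschitz and non-decreasing on (0, ∞), let u₀ > 0 with f(u₀) > 0, and let u be the unique solution of D_c^γ u = f(u), u(0) = u₀, on its maximal interval [0, T_b). Then u is non-decreasing on (0, T_b) and lim_{t→T_b⁻} u(t) = +∞ (where T_b ∈ (0, ∞]; if T_b = ∞ this means u(t) → ∞ as t → ∞). -/

import Mathlib

open MeasureTheory Real Filter Set Asymptotics
open scoped ENNReal Topology

/-- `u` is a solution of the Volterra integral form of the fractional ODE
`D_c^γ u = f(u)`, `u(0) = u₀`, on the interval `[0, T)` (with `T ∈ (0,∞]`),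
taking values in the set `D`. -/
noncomputable def IsSolUpTo (γ : ℝ) (f : ℝ → ℝ) (D : Set ℝ) (u₀ : ℝ) (u : ℝ → ℝ)
    (T : ℝ≥0∞) : Prop :=
  u 0 = u₀ ∧
  ContinuousOn u {t : ℝ | 0 ≤ t ∧ ENNReal.ofReal t < T} ∧
  (∀ t : ℝ, 0 ≤ t → ENNReal.ofReal t < T → u t ∈ D) ∧
  (∀ t : ℝ, 0 ≤ t → ENNReal.ofReal t < T →
    u t = u₀ + (1 / Real.Gamma γ) * ∫ s in (0:ℝ)..t, (t - s) ^ (γ - 1) * f (u s))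

/-- The maximal existence time `T_b`: the supremum of all `T` such that a solution
exists on `[0, T)`. -/
noncomputable def maxTime (γ : ℝ) (f : ℝ → ℝ) (D : Set ℝ) (u₀ : ℝ) : ℝ≥0∞ :=
  sSup {T : ℝ≥0∞ | ∃ u : ℝ → ℝ, IsSolUpTo γ f D u₀ u T}



open intervalIntegral

section helpers

variable {γ : ℝ}

lemma ker_integral (hγ0 : 0 < γ) {t a b : ℝ} :
    ∫ s in a..b, (t - s) ^ (γ - 1) = ((t-a)^γ - (t-b)^γ)/γ := by
  have h1 : (∫ s in a..b, (t - s) ^ (γ - 1)) = ∫ x in (t-b)..(t-a), x ^ (γ-1) :=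
    intervalIntegral.integral_comp_sub_left (fun x => x ^ (γ-1)) t
  have h2 : γ - 1 + 1 = γ := by ring
  rw [h1, integral_rpow (Or.inl (by linarith)), h2]

lemma ker_intervalIntegrable {t a b : ℝ} (hγ0 : 0 < γ) {h : ℝ → ℝ}
    (hc : ContinuousOn h (uIcc a b)) :
    IntervalIntegrable (fun s => (t - s) ^ (γ - 1) * h s) volume a b := by
  have h1 : IntervalIntegrable (fun s => (t - s) ^ (γ - 1)) volume (t - (t-a)) (t - (t-b)) :=
    (intervalIntegrable_rpow' (by linarith) (a := t - a) (b := t - b)).comp_sub_left t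
  simp only [sub_sub_cancel] at h1
  exact h1.mul_continuousOn hc

lemma ker_nonneg {t s : ℝ} (hst : s ≤ t) : 0 ≤ (t - s) ^ (γ - 1) :=
  Real.rpow_nonneg (by linarith) _

end helpers

section bounds

variable {γ : ℝ}

lemma ae_ne_restrict (S : Set ℝ) (b : ℝ) : ∀ᵐ s ∂(volume.restrict S), s ≠ b := by
  refine Filter.Eventually.filter_mono (ae_mono Measure.restrict_le_self) ?_
  rw [Filter.eventually_iff, mem_ae_iff]
  simpa using Real.volume_singleton (a := b)

lemma ker_integral_lower (hγ0 : 0 < γ) {t a b C : ℝ} (hab : a ≤ b) (hbt : b ≤ t) {h : ℝ → ℝ}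
    (hc : ContinuousOn h (Icc a b)) (hC : ∀ s ∈ Ico a b, C ≤ h s) :
    C * (((t-a)^γ - (t-b)^γ)/γ) ≤ ∫ s in a..b, (t - s) ^ (γ - 1) * h s := by
  have huIcc : uIcc a b = Icc a b := uIcc_of_le hab
  have i1 : IntervalIntegrable (fun s => (t - s) ^ (γ - 1) * C) volume a b :=
    ker_intervalIntegrable hγ0 continuousOn_const
  have i2 : IntervalIntegrable (fun s => (t - s) ^ (γ - 1) * h s) volume a b :=
    ker_intervalIntegrable hγ0 (huIcc ▸ hc)
  have hmono : (∫ s in a..b, (t - s) ^ (γ - 1) * C) ≤ ∫ s in a..b, (t - s) ^ (γ - 1) * h s := by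
    refine intervalIntegral.integral_mono_ae_restrict hab i1 i2 ?_
    filter_upwards [ae_restrict_mem measurableSet_Icc, ae_ne_restrict (Icc a b) b] with s hs hne
    have hsIco : s ∈ Ico a b := ⟨hs.1, lt_of_le_of_ne hs.2 hne⟩
    exact mul_le_mul_of_nonneg_left (hC s hsIco) (ker_nonneg (le_trans hs.2 hbt))
  calc C * (((t-a)^γ - (t-b)^γ)/γ) = (∫ s in a..b, (t - s) ^ (γ - 1)) * C := by
        rw [ker_integral hγ0]; ring
    _ = ∫ s in a..b, (t - s) ^ (γ - 1) * C := (intervalIntegral.integral_mul_const _ _).symm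
    _ ≤ _ := hmono

lemma ker_integral_upper (hγ0 : 0 < γ) {t a b M : ℝ} (hab : a ≤ b) (hbt : b ≤ t) {h : ℝ → ℝ}
    (hc : ContinuousOn h (Icc a b)) (hM : ∀ s ∈ Ico a b, |h s| ≤ M) :
    |∫ s in a..b, (t - s) ^ (γ - 1) * h s| ≤ M * (((t-a)^γ - (t-b)^γ)/γ) := by
  have huIcc : uIcc a b = Icc a b := uIcc_of_le hab
  have i2 : IntervalIntegrable (fun s => (t - s) ^ (γ - 1) * h s) volume a b :=
    ker_intervalIntegrable hγ0 (huIcc ▸ hc)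
  have i1 : IntervalIntegrable (fun s => (t - s) ^ (γ - 1) * M) volume a b :=
    ker_intervalIntegrable hγ0 continuousOn_const
  calc |∫ s in a..b, (t - s) ^ (γ - 1) * h s| ≤ ∫ s in a..b, |(t - s) ^ (γ - 1) * h s| :=
        intervalIntegral.abs_integral_le_integral_abs hab
    _ ≤ ∫ s in a..b, (t - s) ^ (γ - 1) * M := by
        refine intervalIntegral.integral_mono_ae_restrict hab i2.abs i1 ?_
        filter_upwards [ae_restrict_mem measurableSet_Icc, ae_ne_restrict (Icc a b) b] with s hs hne
        have hsIco : s ∈ Ico a b := ⟨hs.1, lt_of_le_of_ne hs.2 hne⟩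
        rw [abs_mul, abs_of_nonneg (ker_nonneg (le_trans hs.2 hbt) (γ := γ))]
        exact mul_le_mul_of_nonneg_left (hM s hsIco) (ker_nonneg (le_trans hs.2 hbt))
    _ = M * (((t-a)^γ - (t-b)^γ)/γ) := by
        rw [intervalIntegral.integral_mul_const, ker_integral hγ0]; ring

end bounds

section hoelder

variable {γ : ℝ}

lemma ker_intervalIntegrable' {t a b : ℝ} (hγ0 : 0 < γ) :
    IntervalIntegrable (fun s => (t - s) ^ (γ - 1)) volume a b := by
  simpa using ker_intervalIntegrable (t := t) (a := a) (b := b) hγ0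
    (continuousOn_const (c := (1:ℝ)))

lemma ker_holder (hγ : γ ∈ Ioo (0:ℝ) 1) {A M : ℝ} {h : ℝ → ℝ} (hc : ContinuousOn h (Icc 0 A))
    (hM : ∀ s ∈ Icc 0 A, |h s| ≤ M) {t₁ t₂ : ℝ} (h0 : 0 ≤ t₁) (h12 : t₁ ≤ t₂) (h2A : t₂ ≤ A) :
    |(∫ s in (0:ℝ)..t₂, (t₂-s)^(γ-1) * h s) - ∫ s in (0:ℝ)..t₁, (t₁-s)^(γ-1) * h s|
      ≤ (2*M/γ) * (t₂-t₁)^γ := by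
  have hγ0 := hγ.1
  have h0A : (0:ℝ) ≤ A := le_trans (le_trans h0 h12) h2A
  have hM0 : 0 ≤ M := le_trans (abs_nonneg _) (hM 0 ⟨le_refl _, h0A⟩)
  have hc1 : ContinuousOn h (Icc 0 t₁) := hc.mono (Icc_subset_Icc le_rfl (le_trans h12 h2A))
  have hc2 : ContinuousOn h (Icc t₁ t₂) := hc.mono (Icc_subset_Icc h0 h2A)
  have i21 : IntervalIntegrable (fun s => (t₂ - s) ^ (γ - 1) * h s) volume 0 t₁ :=
    ker_intervalIntegrable hγ0 (by rwa [uIcc_of_le h0])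
  have i11 : IntervalIntegrable (fun s => (t₁ - s) ^ (γ - 1) * h s) volume 0 t₁ :=
    ker_intervalIntegrable hγ0 (by rwa [uIcc_of_le h0])
  have i22 : IntervalIntegrable (fun s => (t₂ - s) ^ (γ - 1) * h s) volume t₁ t₂ :=
    ker_intervalIntegrable hγ0 (by rwa [uIcc_of_le h12])
  have hsplit : (∫ s in (0:ℝ)..t₂, (t₂-s)^(γ-1) * h s)
      = (∫ s in (0:ℝ)..t₁, (t₂-s)^(γ-1) * h s) + ∫ s in t₁..t₂, (t₂-s)^(γ-1) * h s :=
    (intervalIntegral.integral_add_adjacent_intervals i21 i22).symm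
  have term2 : |∫ s in t₁..t₂, (t₂-s)^(γ-1) * h s| ≤ M/γ * (t₂-t₁)^γ := by
    have := ker_integral_upper hγ0 h12 (le_refl t₂) hc2 (fun s hs => hM s
      ⟨le_trans h0 hs.1, le_trans hs.2.le h2A⟩)
    rw [sub_self, Real.zero_rpow (ne_of_gt hγ0), sub_zero] at this
    calc _ ≤ M * ((t₂-t₁)^γ/γ) := this
      _ = M/γ * (t₂-t₁)^γ := by ring
  have term1 : |∫ s in (0:ℝ)..t₁, ((t₂-s)^(γ-1) - (t₁-s)^(γ-1)) * h s| ≤ M/γ * (t₂-t₁)^γ := by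
    have idiff : IntervalIntegrable (fun s => ((t₂-s)^(γ-1) - (t₁-s)^(γ-1)) * h s) volume 0 t₁ := by
      have heq : (fun s => ((t₂-s)^(γ-1) - (t₁-s)^(γ-1)) * h s)
          = (fun s => (t₂-s)^(γ-1) * h s - (t₁-s)^(γ-1) * h s) := by funext s; ring
      rw [heq]; exact i21.sub i11
    have ibnd : IntervalIntegrable (fun s => ((t₁-s)^(γ-1) - (t₂-s)^(γ-1)) * M) volume 0 t₁ :=
      (((ker_intervalIntegrable' hγ0).sub (ker_intervalIntegrable' hγ0)).mul_continuousOn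
        continuousOn_const)
    have key : (∫ s in (0:ℝ)..t₁, |((t₂-s)^(γ-1) - (t₁-s)^(γ-1)) * h s|)
        ≤ ∫ s in (0:ℝ)..t₁, ((t₁-s)^(γ-1) - (t₂-s)^(γ-1)) * M := by
      refine intervalIntegral.integral_mono_ae_restrict h0 idiff.abs ibnd ?_
      filter_upwards [ae_restrict_mem measurableSet_Icc, ae_ne_restrict (Icc 0 t₁) t₁]
        with s hs hne
      have hs1 : 0 < t₁ - s := by
        rcases lt_of_le_of_ne hs.2 hne with h'; linarith
      have hk : (t₂-s)^(γ-1) ≤ (t₁-s)^(γ-1) :=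
        Real.rpow_le_rpow_of_nonpos hs1 (by linarith) (by linarith [hγ.2])
      rw [abs_mul, abs_of_nonpos (by linarith : (t₂-s)^(γ-1) - (t₁-s)^(γ-1) ≤ 0), neg_sub]
      exact mul_le_mul_of_nonneg_left (hM s ⟨hs.1, le_trans hs.2 (le_trans h12 h2A)⟩)
        (by linarith)
    have val : (∫ s in (0:ℝ)..t₁, ((t₁-s)^(γ-1) - (t₂-s)^(γ-1)) * M)
        = ((t₁-0)^γ - (t₁-t₁)^γ)/γ * M - ((t₂-0)^γ - (t₂-t₁)^γ)/γ * M := by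
      rw [intervalIntegral.integral_mul_const,
        intervalIntegral.integral_sub (ker_intervalIntegrable' hγ0) (ker_intervalIntegrable' hγ0),
        ker_integral hγ0, ker_integral hγ0]
      ring
    have hmono12 : t₁ ^ γ ≤ t₂ ^ γ := Real.rpow_le_rpow h0 h12 hγ0.le
    calc |∫ s in (0:ℝ)..t₁, ((t₂-s)^(γ-1) - (t₁-s)^(γ-1)) * h s|
        ≤ ∫ s in (0:ℝ)..t₁, |((t₂-s)^(γ-1) - (t₁-s)^(γ-1)) * h s| :=
          intervalIntegral.abs_integral_le_integral_abs h0
      _ ≤ ∫ s in (0:ℝ)..t₁, ((t₁-s)^(γ-1) - (t₂-s)^(γ-1)) * M := key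
      _ = ((t₁-0)^γ - (t₁-t₁)^γ)/γ * M - ((t₂-0)^γ - (t₂-t₁)^γ)/γ * M := val
      _ ≤ M/γ * (t₂-t₁)^γ := by
          rw [sub_self, Real.zero_rpow (ne_of_gt hγ0), sub_zero, sub_zero, sub_zero]
          have : t₁^γ - t₂^γ + (t₂-t₁)^γ ≤ (t₂-t₁)^γ := by linarith
          have hrw : t₁^γ/γ * M - (t₂^γ - (t₂-t₁)^γ)/γ * M
              = (t₁^γ - t₂^γ + (t₂-t₁)^γ) * (M/γ) := by field_simp; ring
          rw [hrw]
          have := mul_le_mul_of_nonneg_right this (div_nonneg hM0 hγ0.le)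
          linarith
  have hdiff : (∫ s in (0:ℝ)..t₂, (t₂-s)^(γ-1) * h s) - ∫ s in (0:ℝ)..t₁, (t₁-s)^(γ-1) * h s
      = (∫ s in (0:ℝ)..t₁, ((t₂-s)^(γ-1) - (t₁-s)^(γ-1)) * h s)
        + ∫ s in t₁..t₂, (t₂-s)^(γ-1) * h s := by
    have e1 : (∫ s in (0:ℝ)..t₁, ((t₂-s)^(γ-1) - (t₁-s)^(γ-1)) * h s)
        = (∫ s in (0:ℝ)..t₁, (t₂-s)^(γ-1) * h s) - ∫ s in (0:ℝ)..t₁, (t₁-s)^(γ-1) * h s := by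
      rw [← intervalIntegral.integral_sub i21 i11]
      exact intervalIntegral.integral_congr (fun s _ => by ring)
    rw [hsplit, e1]; ring
  rw [hdiff]
  calc _ ≤ |∫ s in (0:ℝ)..t₁, ((t₂-s)^(γ-1) - (t₁-s)^(γ-1)) * h s|
        + |∫ s in t₁..t₂, (t₂-s)^(γ-1) * h s| := abs_add_le _ _
    _ ≤ M/γ * (t₂-t₁)^γ + M/γ * (t₂-t₁)^γ := add_le_add term1 term2
    _ = (2*M/γ) * (t₂-t₁)^γ := by ring

end hoelder

section cont

variable {γ : ℝ}

lemma ker_continuousOn (hγ : γ ∈ Ioo (0:ℝ) 1) {A : ℝ} (hA : 0 ≤ A) {h : ℝ → ℝ}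
    (hc : ContinuousOn h (Icc 0 A)) :
    ContinuousOn (fun t => ∫ s in (0:ℝ)..t, (t-s)^(γ-1) * h s) (Icc 0 A) := by
  obtain ⟨M, hM⟩ := isCompact_Icc.exists_bound_of_continuousOn hc
  have hM' : ∀ s ∈ Icc 0 A, |h s| ≤ M := fun s hs => hM s hs
  have hM0 : 0 ≤ M := le_trans (abs_nonneg _) (hM' 0 ⟨le_refl _, hA⟩)
  set G : ℝ → ℝ := fun t => ∫ s in (0:ℝ)..t, (t-s)^(γ-1) * h s with hG
  have key : ∀ x ∈ Icc (0:ℝ) A, ∀ y ∈ Icc (0:ℝ) A, |G y - G x| ≤ (2*M/γ) * |y - x| ^ γ := by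
    intro x hx y hy
    rcases le_total x y with hxy | hxy
    · rw [abs_of_nonneg (by linarith : (0:ℝ) ≤ y - x)]
      exact ker_holder hγ hc hM' hx.1 hxy hy.2
    · rw [abs_sub_comm, abs_of_nonpos (by linarith : y - x ≤ 0), neg_sub]
      exact ker_holder hγ hc hM' hy.1 hxy hx.2
  rw [Metric.continuousOn_iff]
  intro x hx ε hε
  obtain ⟨B, hB⟩ : ∃ B : ℝ, B = 2*M/γ + 1 := ⟨_, rfl⟩
  have hB0 : 0 < B := by
    have : 0 ≤ 2*M/γ := div_nonneg (by linarith) hγ.1.le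
    linarith
  have hεB : 0 < ε / B := div_pos hε hB0
  refine ⟨(ε/B) ^ γ⁻¹, Real.rpow_pos_of_pos hεB _, fun y hy hdist => ?_⟩
  rw [Real.dist_eq] at hdist
  have h1 : |y - x| ^ γ < ε / B := by
    have := Real.rpow_lt_rpow (abs_nonneg (y - x)) hdist hγ.1
    rwa [Real.rpow_inv_rpow hεB.le (ne_of_gt hγ.1)] at this
  have h2 : |G y - G x| ≤ (2*M/γ) * |y - x| ^ γ := key x hx y hy
  have h3 : (2*M/γ) * |y - x| ^ γ ≤ B * |y-x| ^ γ :=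
    mul_le_mul_of_nonneg_right (by rw [hB]; linarith) (Real.rpow_nonneg (abs_nonneg _) _)
  have h4 : B * |y-x| ^ γ < B * (ε / B) := by
    exact mul_lt_mul_of_pos_left h1 hB0
  rw [mul_div_cancel₀ _ (ne_of_gt hB0)] at h4
  calc dist (G y) (G x) = |G y - G x| := Real.dist_eq _ _
    _ < ε := by linarith

end cont

section crossing

lemma first_crossing {b : ℝ} {φ : ℝ → ℝ}
    (hφc : ContinuousOn φ (Icc 0 b))
    (Hsmall : ∃ δ > 0, ∀ t, 0 < t → t ≤ δ → t ≤ b → 0 < φ t)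
    (h0 : 0 ≤ φ 0)
    (H : ∀ t, 0 < t → t ≤ b → (∀ s, 0 ≤ s → s < t → 0 ≤ φ s) → 0 < φ t) :
    ∀ t, 0 < t → t ≤ b → 0 < φ t := by
  obtain ⟨δ, hδ0, hδ⟩ := Hsmall
  by_contra hcon
  push_neg at hcon
  obtain ⟨t₀, ht₀0, ht₀b, ht₀⟩ := hcon
  set E := {t : ℝ | 0 < t ∧ t ≤ b ∧ φ t ≤ 0} with hE
  have hEne : E.Nonempty := ⟨t₀, ht₀0, ht₀b, ht₀⟩
  have hEbdd : BddBelow E := ⟨0, fun e he => he.1.le⟩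
  set m := sInf E with hm
  have hm_ge : δ ≤ m := by
    refine le_csInf hEne (fun e he => ?_)
    by_contra hle; push_neg at hle
    exact absurd (hδ e he.1 hle.le he.2.1) (not_lt.mpr he.2.2)
  have hm0 : 0 < m := lt_of_lt_of_le hδ0 hm_ge
  have hmb : m ≤ b := le_trans (csInf_le hEbdd hEne.choose_spec) hEne.choose_spec.2.1
  have hnonneg : ∀ s, 0 ≤ s → s < m → 0 ≤ φ s := by
    intro s hs0 hsm
    rcases eq_or_lt_of_le hs0 with h | h
    · rw [← h]; exact h0
    · by_contra hneg; push_neg at hneg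
      exact absurd (csInf_le hEbdd ⟨h, le_trans hsm.le hmb, hneg.le⟩) (not_le.mpr hsm)
  have hφm : 0 < φ m := H m hm0 hmb hnonneg
  have hcw : ContinuousWithinAt φ (Icc 0 b) m := hφc m ⟨hm0.le, hmb⟩
  have hpre : φ ⁻¹' (Ioi 0) ∈ 𝓝[Icc 0 b] m := hcw (Ioi_mem_nhds hφm)
  rw [Metric.mem_nhdsWithin_iff] at hpre
  obtain ⟨ε, hε0, hball⟩ := hpre
  obtain ⟨e, heE, helt⟩ := exists_lt_of_csInf_lt hEne (by linarith : sInf E < m + ε)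
  have hme : m ≤ e := csInf_le hEbdd heE
  have heball : e ∈ Metric.ball m ε ∩ Icc 0 b := by
    constructor
    · rw [Metric.mem_ball, Real.dist_eq, abs_of_nonneg (by linarith)]
      linarith
    · exact ⟨heE.1.le, heE.2.1⟩
  exact absurd (hball heball) (not_lt.mpr heE.2.2)

end crossing

section sol

variable {γ u₀ : ℝ} {f u : ℝ → ℝ}

lemma sol_lower (hγ : γ ∈ Ioo (0:ℝ) 1) (hmono : MonotoneOn f (Ioi 0)) (hu₀ : 0 < u₀)
    (hfu₀ : 0 < f u₀) (fcont : ContinuousOn f (Ioi 0)) {A : ℝ} (hA : 0 < A)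
    (hc : ContinuousOn u (Ico 0 A)) (h0 : u 0 = u₀)
    (hpos : ∀ t ∈ Ico (0:ℝ) A, 0 < u t)
    (heq : ∀ t ∈ Ico (0:ℝ) A,
      u t = u₀ + (1/Real.Gamma γ) * ∫ s in (0:ℝ)..t, (t-s)^(γ-1) * f (u s)) :
    ∀ t ∈ Ico (0:ℝ) A, u₀ + (1/Real.Gamma γ) * (f u₀ * (t^γ/γ)) ≤ u t := by
  have hγ0 := hγ.1
  have hcγ : 0 < 1/Real.Gamma γ := by
    have := Real.Gamma_pos_of_pos hγ0
    positivity
  set g : ℝ → ℝ := fun s => f (u s) with hg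
  have gcont : ContinuousOn g (Ico 0 A) := fcont.comp hc (fun t ht => hpos t ht)
  -- small-time positivity
  have hg00 : g 0 = f u₀ := by rw [hg]; simp [h0]
  have hpre : g ⁻¹' (Ioi (f u₀ / 2)) ∈ 𝓝[Ico 0 A] 0 := by
    refine (gcont 0 ⟨le_rfl, hA⟩) ?_
    rw [hg00]
    exact Ioi_mem_nhds (by linarith)
  rw [Metric.mem_nhdsWithin_iff] at hpre
  obtain ⟨δ', hδ'0, hball⟩ := hpre
  -- step 1 : strict positivity u t > u₀ on (0, A)
  have step1 : ∀ t, 0 < t → t < A → u₀ < u t := by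
    intro t₀ ht₀0 ht₀A
    have hIccsub : Icc (0:ℝ) t₀ ⊆ Ico 0 A := fun s hs => ⟨hs.1, lt_of_le_of_lt hs.2 ht₀A⟩
    have key := first_crossing (b := t₀) (φ := fun t => u t - u₀)
      ((hc.mono hIccsub).sub continuousOn_const)
      ⟨δ'/2, by linarith, fun t ht0 htδ htb => ?_⟩
      (by simp [h0]) (fun t ht0 htb hind => ?_)
    · have hk : 0 < u t₀ - u₀ := key t₀ ht₀0 le_rfl
      linarith
    · -- small time
      have htA : t < A := lt_of_le_of_lt htb ht₀A
      have hCs : ∀ s ∈ Ico (0:ℝ) t, f u₀ / 2 ≤ g s := by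
        intro s hs
        have : s ∈ Metric.ball (0:ℝ) δ' ∩ Ico 0 A := by
          constructor
          · rw [Metric.mem_ball, Real.dist_eq, sub_zero, abs_of_nonneg hs.1]
            linarith [hs.2]
          · exact ⟨hs.1, lt_trans hs.2 htA⟩
        exact (hball this).le
      have hlow := ker_integral_lower hγ0 ht0.le le_rfl
        (gcont.mono (fun s hs => ⟨hs.1, lt_of_le_of_lt hs.2 htA⟩)) hCs
      rw [sub_zero, sub_self, Real.zero_rpow (ne_of_gt hγ0), sub_zero] at hlow
      have hteq := heq t ⟨ht0.le, htA⟩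
      have htγ : 0 < t ^ γ := Real.rpow_pos_of_pos ht0 _
      have : 0 < (1/Real.Gamma γ) * ∫ s in (0:ℝ)..t, (t-s)^(γ-1) * g s := by
        have h1 : 0 < f u₀ / 2 * (t^γ/γ) := by positivity
        exact mul_pos hcγ (lt_of_lt_of_le h1 hlow)
      show 0 < u t - u₀
      rw [hteq]; linarith
    · -- inductive step
      have htA : t < A := lt_of_le_of_lt htb ht₀A
      have hCs : ∀ s ∈ Ico (0:ℝ) t, f u₀ ≤ g s := by
        intro s hs
        have hsIco : s ∈ Ico (0:ℝ) A := ⟨hs.1, lt_trans hs.2 htA⟩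
        have hus : u₀ ≤ u s := by
          have h2 : 0 ≤ u s - u₀ := hind s hs.1 hs.2
          linarith
        exact hmono (mem_Ioi.mpr hu₀) (mem_Ioi.mpr (hpos s hsIco)) hus
      have hlow := ker_integral_lower hγ0 ht0.le le_rfl
        (gcont.mono (fun s hs => ⟨hs.1, lt_of_le_of_lt hs.2 htA⟩)) hCs
      rw [sub_zero, sub_self, Real.zero_rpow (ne_of_gt hγ0), sub_zero] at hlow
      have hteq := heq t ⟨ht0.le, htA⟩
      have htγ : 0 < t ^ γ := Real.rpow_pos_of_pos ht0 _
      have : 0 < (1/Real.Gamma γ) * ∫ s in (0:ℝ)..t, (t-s)^(γ-1) * g s := by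
        have h1 : 0 < f u₀ * (t^γ/γ) := by positivity
        exact mul_pos hcγ (lt_of_lt_of_le h1 hlow)
      show 0 < u t - u₀
      rw [hteq]; linarith
  -- quantitative bound
  intro t ht
  rcases eq_or_lt_of_le ht.1 with h | ht0
  · rw [← h, Real.zero_rpow (ne_of_gt hγ0), h0]
    simp
  · have hCs : ∀ s ∈ Ico (0:ℝ) t, f u₀ ≤ g s := by
      intro s hs
      have hsIco : s ∈ Ico (0:ℝ) A := ⟨hs.1, lt_trans hs.2 ht.2⟩
      have hus : u₀ ≤ u s := by
        rcases eq_or_lt_of_le hs.1 with h' | h'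
        · rw [← h', h0]
        · exact (step1 s h' hsIco.2).le
      exact hmono (mem_Ioi.mpr hu₀) (mem_Ioi.mpr (hpos s hsIco)) hus
    have hlow := ker_integral_lower hγ0 ht.1 le_rfl
      (gcont.mono (fun s hs => ⟨hs.1, lt_of_le_of_lt hs.2 ht.2⟩)) hCs
    rw [sub_zero, sub_self, Real.zero_rpow (ne_of_gt hγ0), sub_zero] at hlow
    have hteq := heq t ht
    rw [hteq]
    have := mul_le_mul_of_nonneg_left hlow hcγ.le
    have hrw : f u₀ * ((t:ℝ)^γ/γ) = f u₀ * (t^γ/γ) := rfl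
    linarith [this]

end sol

section mono

variable {γ u₀ : ℝ} {f u : ℝ → ℝ}

lemma sol_mono (hγ : γ ∈ Ioo (0:ℝ) 1) (hmono : MonotoneOn f (Ioi 0)) (hu₀ : 0 < u₀)
    (hfu₀ : 0 < f u₀) (fcont : ContinuousOn f (Ioi 0)) {A : ℝ} (hA : 0 < A)
    (hc : ContinuousOn u (Ico 0 A)) (h0 : u 0 = u₀)
    (hpos : ∀ t ∈ Ico (0:ℝ) A, 0 < u t)
    (heq : ∀ t ∈ Ico (0:ℝ) A,
      u t = u₀ + (1/Real.Gamma γ) * ∫ s in (0:ℝ)..t, (t-s)^(γ-1) * f (u s)) :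
    ∀ t₁ t₂, 0 < t₁ → t₁ ≤ t₂ → t₂ < A → u t₁ ≤ u t₂ := by
  have hγ0 := hγ.1
  have hcγ : 0 < 1/Real.Gamma γ := by
    have := Real.Gamma_pos_of_pos hγ0
    positivity
  have hlow := sol_lower hγ hmono hu₀ hfu₀ fcont hA hc h0 hpos heq
  have hge : ∀ t ∈ Ico (0:ℝ) A, u₀ ≤ u t := by
    intro t ht
    refine le_trans ?_ (hlow t ht)
    have h1 : 0 ≤ (t:ℝ)^γ := Real.rpow_nonneg ht.1 _
    have h2 : 0 ≤ f u₀ * (t^γ/γ) := by positivity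
    nlinarith [hcγ]
  have hgt : ∀ t ∈ Ico (0:ℝ) A, 0 < t → u₀ < u t := by
    intro t ht ht0
    refine lt_of_lt_of_le ?_ (hlow t ht)
    have h1 : 0 < (t:ℝ)^γ := Real.rpow_pos_of_pos ht0 _
    have h2 : 0 < f u₀ * (t^γ/γ) := by positivity
    nlinarith [hcγ]
  intro t₁ t₂ ht₁0 h12 ht₂A
  rcases eq_or_lt_of_le h12 with rfl | hlt
  · exact le_rfl
  obtain ⟨h, hhdef⟩ : ∃ h : ℝ, h = t₂ - t₁ := ⟨_, rfl⟩
  have hh0 : 0 < h := by rw [hhdef]; linarith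
  have ht₁A : t₁ < A := lt_trans hlt ht₂A
  set g : ℝ → ℝ := fun s => f (u s) with hgdef
  have gcont : ContinuousOn g (Ico 0 A) := fcont.comp hc (fun t ht => hpos t ht)
  have hshiftc : Continuous (fun σ : ℝ => σ + h) := continuous_id.add continuous_const
  have contφ : ContinuousOn (fun σ => u (σ + h) - u σ) (Icc 0 t₁) := by
    refine ContinuousOn.sub ?_ (hc.mono (fun s hs => ⟨hs.1, lt_of_le_of_lt hs.2 ht₁A⟩))
    refine hc.comp hshiftc.continuousOn (fun s hs => ?_)
    constructor
    · linarith [hs.1, hh0.le]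
    · have : s + h ≤ t₂ := by rw [hhdef]; linarith [hs.2]
      linarith
  have hφ0 : 0 < u (0 + h) - u 0 := by
    rw [zero_add, h0]
    have := hgt h ⟨hh0.le, by rw [hhdef]; linarith⟩ hh0
    linarith
  -- small-time positivity of φ via continuity
  have hpre : (fun σ => u (σ + h) - u σ) ⁻¹' (Ioi 0) ∈ 𝓝[Icc 0 t₁] 0 :=
    (contφ 0 ⟨le_rfl, ht₁0.le⟩) (Ioi_mem_nhds hφ0)
  rw [Metric.mem_nhdsWithin_iff] at hpre
  obtain ⟨δ', hδ'0, hball⟩ := hpre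
  have key := first_crossing (b := t₁) (φ := fun σ => u (σ + h) - u σ) contφ
    ⟨δ'/2, by linarith, fun t ht0 htδ htb => ?_⟩ hφ0.le (fun σ hσ0 hσt₁ hind => ?_)
  · have hk : 0 < u (t₁ + h) - u t₁ := key t₁ ht₁0 le_rfl
    have : t₁ + h = t₂ := by rw [hhdef]; ring
    rw [this] at hk
    linarith
  · -- small time
    refine hball ⟨?_, ⟨ht0.le, htb⟩⟩
    rw [Metric.mem_ball, Real.dist_eq, sub_zero, abs_of_nonneg ht0.le]
    linarith
  · -- inductive step
    have hσhA : σ + h ≤ t₂ := by rw [hhdef]; linarith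
    have hσA : σ < A := by linarith
    have hmemσh : σ + h ∈ Ico (0:ℝ) A := ⟨by linarith [hσ0.le, hh0.le], by linarith⟩
    have huσh := heq (σ + h) hmemσh
    have huσ := heq σ ⟨hσ0.le, hσA⟩
    have gsub1 : Icc (0:ℝ) h ⊆ Ico 0 A := fun s hs => ⟨hs.1, by
      have : s ≤ h := hs.2
      have hhA : h < A := by rw [hhdef]; linarith
      linarith⟩
    have gsub2 : Icc h (σ+h) ⊆ Ico 0 A := fun s hs => ⟨le_trans hh0.le hs.1, by
      have := hs.2; linarith⟩
    have i1 : IntervalIntegrable (fun s => (σ+h-s)^(γ-1) * g s) volume 0 h :=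
      ker_intervalIntegrable hγ0 (by rw [uIcc_of_le hh0.le]; exact gcont.mono gsub1)
    have i2 : IntervalIntegrable (fun s => (σ+h-s)^(γ-1) * g s) volume h (σ+h) :=
      ker_intervalIntegrable hγ0 (by
        rw [uIcc_of_le (by linarith : h ≤ σ + h)]; exact gcont.mono gsub2)
    have hsplit : (∫ s in (0:ℝ)..(σ+h), (σ+h-s)^(γ-1) * g s)
        = (∫ s in (0:ℝ)..h, (σ+h-s)^(γ-1) * g s) + ∫ s in h..(σ+h), (σ+h-s)^(γ-1) * g s :=
      (intervalIntegral.integral_add_adjacent_intervals i1 i2).symm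
    have hsub : (∫ s in h..(σ+h), (σ+h-s)^(γ-1) * g s)
        = ∫ τ in (0:ℝ)..σ, (σ-τ)^(γ-1) * g (τ+h) := by
      have hca := intervalIntegral.integral_comp_add_right (a := (0:ℝ)) (b := σ)
        (fun s => (σ+h-s)^(γ-1) * g s) h
      rw [zero_add] at hca
      rw [← hca]
      refine intervalIntegral.integral_congr (fun τ _ => ?_)
      have : σ + h - (τ + h) = σ - τ := by ring
      simp only [this]
    have gshiftc : ContinuousOn (fun τ => g (τ + h)) (Icc 0 σ) := by
      refine gcont.comp hshiftc.continuousOn (fun τ hτ => ?_)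
      exact ⟨by linarith [hτ.1, hh0.le], by linarith [hτ.2]⟩
    have gplainc : ContinuousOn g (Icc 0 σ) := gcont.mono (fun s hs => ⟨hs.1, by
      linarith [hs.2]⟩)
    have i3 : IntervalIntegrable (fun τ => (σ-τ)^(γ-1) * g (τ+h)) volume 0 σ :=
      ker_intervalIntegrable hγ0 (by rw [uIcc_of_le hσ0.le]; exact gshiftc)
    have i4 : IntervalIntegrable (fun τ => (σ-τ)^(γ-1) * g τ) volume 0 σ :=
      ker_intervalIntegrable hγ0 (by rw [uIcc_of_le hσ0.le]; exact gplainc)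
    have hcombine : (∫ τ in (0:ℝ)..σ, (σ-τ)^(γ-1) * g (τ+h)) - ∫ τ in (0:ℝ)..σ, (σ-τ)^(γ-1) * g τ
        = ∫ τ in (0:ℝ)..σ, (σ-τ)^(γ-1) * (g (τ+h) - g τ) := by
      rw [← intervalIntegral.integral_sub i3 i4]
      exact intervalIntegral.integral_congr (fun τ _ => by ring)
    -- lower bound for the first piece
    have hC1 : ∀ s ∈ Ico (0:ℝ) h, f u₀ ≤ g s := by
      intro s hs
      have hsA : s ∈ Ico (0:ℝ) A := gsub1 ⟨hs.1, hs.2.le⟩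
      exact hmono (mem_Ioi.mpr hu₀) (mem_Ioi.mpr (hpos s hsA)) (hge s hsA)
    have hB1 := ker_integral_lower hγ0 hh0.le (by linarith : h ≤ σ + h)
      (gcont.mono gsub1) hC1
    rw [sub_zero, add_sub_cancel_right] at hB1
    have hB1pos : 0 < f u₀ * (((σ+h)^γ - σ^γ)/γ) := by
      have hlt : σ^γ < (σ+h)^γ := Real.rpow_lt_rpow hσ0.le (by linarith) hγ0
      have : 0 < ((σ+h)^γ - σ^γ)/γ := div_pos (by linarith) hγ0
      exact mul_pos hfu₀ this
    -- nonnegativity of the difference piece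
    have hC2 : ∀ τ ∈ Ico (0:ℝ) σ, (0:ℝ) ≤ g (τ+h) - g τ := by
      intro τ hτ
      have hτA : τ ∈ Ico (0:ℝ) A := ⟨hτ.1, by linarith [hτ.2]⟩
      have hτhA : τ + h ∈ Ico (0:ℝ) A := ⟨by linarith [hτ.1, hh0.le], by
        have : τ + h < σ + h := by linarith [hτ.2]
        linarith⟩
      have hφτ : 0 ≤ u (τ + h) - u τ := hind τ hτ.1 hτ.2
      have : g τ ≤ g (τ + h) :=
        hmono (mem_Ioi.mpr (hpos τ hτA)) (mem_Ioi.mpr (hpos (τ+h) hτhA)) (by linarith)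
      linarith
    have hB2 := ker_integral_lower hγ0 hσ0.le le_rfl (gshiftc.sub gplainc) hC2
    rw [zero_mul] at hB2
    -- put it together
    show 0 < u (σ + h) - u σ
    rw [huσh, huσ]
    have hfinal : (u₀ + (1/Real.Gamma γ) * ∫ s in (0:ℝ)..(σ+h), (σ+h-s)^(γ-1) * g s)
        - (u₀ + (1/Real.Gamma γ) * ∫ s in (0:ℝ)..σ, (σ-s)^(γ-1) * g s)
        = (1/Real.Gamma γ) * ((∫ s in (0:ℝ)..h, (σ+h-s)^(γ-1) * g s)
          + ∫ τ in (0:ℝ)..σ, (σ-τ)^(γ-1) * (g (τ+h) - g τ)) := by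
      rw [hsplit, hsub, ← hcombine]
      ring
    have hsum : 0 < (∫ s in (0:ℝ)..h, (σ+h-s)^(γ-1) * g s)
        + ∫ τ in (0:ℝ)..σ, (σ-τ)^(γ-1) * (g (τ+h) - g τ) := by
      have := lt_of_lt_of_le hB1pos hB1
      simp only [Pi.sub_apply] at hB2
      linarith
    calc (0:ℝ) < (1/Real.Gamma γ) * ((∫ s in (0:ℝ)..h, (σ+h-s)^(γ-1) * g s)
          + ∫ τ in (0:ℝ)..σ, (σ-τ)^(γ-1) * (g (τ+h) - g τ)) := mul_pos hcγ hsum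
      _ = _ := hfinal.symm

end mono

section lip

variable {f : ℝ → ℝ}

lemma lip_continuousOn
    (hf : ∀ x ∈ Ioi (0:ℝ), ∃ K : NNReal, ∃ s ∈ 𝓝[Ioi (0:ℝ)] x, LipschitzOnWith K f s) :
    ContinuousOn f (Ioi 0) := by
  intro x hx
  obtain ⟨K, s, hs, hl⟩ := hf x hx
  have hxs : x ∈ s := mem_of_mem_nhdsWithin hx hs
  exact (hl.continuousOn x hxs).mono_of_mem_nhdsWithin hs

lemma lip_local
    (hf : ∀ x ∈ Ioi (0:ℝ), ∃ K : NNReal, ∃ s ∈ 𝓝[Ioi (0:ℝ)] x, LipschitzOnWith K f s)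
    {b : ℝ} (hb : 0 < b) :
    ∃ K : NNReal, ∃ ρ : ℝ, 0 < ρ ∧ ρ < b ∧ LipschitzOnWith K f (Icc (b-ρ) (b+ρ)) := by
  obtain ⟨K, s, hs, hl⟩ := hf b hb
  rw [Metric.mem_nhdsWithin_iff] at hs
  obtain ⟨ε, hε0, hsub⟩ := hs
  refine ⟨K, min (ε/2) (b/2), by positivity, ?_, ?_⟩
  · calc min (ε/2) (b/2) ≤ b/2 := min_le_right _ _
      _ < b := by linarith
  · refine hl.mono (fun x hx => hsub ⟨?_, ?_⟩)
    · rw [Metric.mem_ball, Real.dist_eq]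
      have h1 : min (ε/2) (b/2) ≤ ε/2 := min_le_left _ _
      rw [abs_lt]
      constructor <;> linarith [hx.1, hx.2]
    · have h2 : min (ε/2) (b/2) ≤ b/2 := min_le_right _ _
      have := hx.1
      simp only [mem_Ioi]
      linarith

end lip

section extend

lemma extend_sol {γ u₀ : ℝ} {f : ℝ → ℝ}
    (hγ : γ ∈ Ioo (0:ℝ) 1)
    (hf : ∀ x ∈ Ioi (0:ℝ), ∃ K : NNReal, ∃ s ∈ 𝓝[Ioi (0:ℝ)] x, LipschitzOnWith K f s)
    (hu₀ : 0 < u₀) {T₀ : ℝ} (hT₀ : 0 ≤ T₀) {w : ℝ → ℝ}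
    (hwc : ContinuousOn w (Icc 0 T₀)) (hw0 : w 0 = u₀)
    (hwge : ∀ t ∈ Icc (0:ℝ) T₀, u₀ ≤ w t)
    (hweq : ∀ t ∈ Icc (0:ℝ) T₀,
      w t = u₀ + (1/Real.Gamma γ) * ∫ s in (0:ℝ)..t, (t-s)^(γ-1) * f (w s)) :
    ∃ ε > 0, ∃ v : ℝ → ℝ, IsSolUpTo γ f (Set.Ioi 0) u₀ v (ENNReal.ofReal (T₀ + ε)) := by
  classical
  have hγ0 := hγ.1
  have hcγ : 0 < 1/Real.Gamma γ := by
    have := Real.Gamma_pos_of_pos hγ0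
    positivity
  have fcont : ContinuousOn f (Ioi 0) := lip_continuousOn hf
  obtain ⟨b, hbdef⟩ : ∃ b : ℝ, b = w T₀ := ⟨_, rfl⟩
  have hb : 0 < b := by rw [hbdef]; exact lt_of_lt_of_le hu₀ (hwge T₀ ⟨hT₀, le_rfl⟩)
  obtain ⟨K, ρ, hρ0, hρb, hK⟩ := lip_local hf hb
  -- bound on f ∘ w
  have hwpos : ∀ t ∈ Icc (0:ℝ) T₀, w t ∈ Ioi (0:ℝ) :=
    fun t ht => mem_Ioi.mpr (lt_of_lt_of_le hu₀ (hwge t ht))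
  have hfw_cont : ContinuousOn (fun t => f (w t)) (Icc 0 T₀) := fcont.comp hwc hwpos
  obtain ⟨M₁, hM₁⟩ := isCompact_Icc.exists_bound_of_continuousOn hfw_cont
  obtain ⟨Mf, hMfdef⟩ : ∃ Mf : ℝ, Mf = |f b| + (K:ℝ)*ρ := ⟨_, rfl⟩
  have hMf : ∀ x ∈ Icc (b-ρ) (b+ρ), |f x| ≤ Mf := by
    intro x hx
    have hbmem : b ∈ Icc (b-ρ) (b+ρ) := ⟨by linarith, by linarith⟩
    have := hK.dist_le_mul x hx b hbmem
    rw [Real.dist_eq, Real.dist_eq] at this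
    have habs : |x - b| ≤ ρ := by
      rw [abs_le]; constructor <;> linarith [hx.1, hx.2]
    calc |f x| ≤ |f b| + |f x - f b| := by
          have := abs_sub_abs_le_abs_sub (f x) (f b); linarith [abs_sub_abs_le_abs_sub (f x) (f b)]
      _ ≤ |f b| + (K:ℝ) * ρ := by
          have h2 : (K:ℝ) * |x - b| ≤ (K:ℝ) * ρ := mul_le_mul_of_nonneg_left habs K.2
          linarith
      _ = Mf := hMfdef.symm
  obtain ⟨M, hMdef⟩ : ∃ M : ℝ, M = max M₁ Mf + 1 := ⟨_, rfl⟩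
  have hMfnn : 0 ≤ Mf := le_trans (abs_nonneg _) (hMf b ⟨by linarith, by linarith⟩)
  have hM0 : 0 < M := by
    have : Mf ≤ max M₁ Mf := le_max_right _ _
    rw [hMdef]; linarith
  have hM₁le : M₁ ≤ M := by rw [hMdef]; have := le_max_left M₁ Mf; linarith
  have hMfle : Mf ≤ M := by rw [hMdef]; have := le_max_right M₁ Mf; linarith
  -- choose ε
  obtain ⟨P, hPdef⟩ : ∃ P : ℝ,
      P = (1/Real.Gamma γ) * (2*M/γ) + (1/Real.Gamma γ) * K * (1/γ) + 1 := ⟨_, rfl⟩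
  have hP0 : 0 < P := by
    have h1 : 0 ≤ (1/Real.Gamma γ) * (2*M/γ) := by positivity
    have h2 : 0 ≤ (1/Real.Gamma γ) * (K:ℝ) * (1/γ) := by positivity
    rw [hPdef]; linarith
  obtain ⟨q, hqdef⟩ : ∃ q : ℝ, q = min ρ (1/2) / P := ⟨_, rfl⟩
  have hq0 : 0 < q := by
    rw [hqdef]
    exact div_pos (lt_min hρ0 (by norm_num)) hP0
  obtain ⟨ε, hεdef⟩ : ∃ ε : ℝ, ε = min 1 (q ^ γ⁻¹) := ⟨_, rfl⟩
  have hε0 : 0 < ε := by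
    rw [hεdef]
    exact lt_min one_pos (Real.rpow_pos_of_pos hq0 _)
  have hεγq : ε ^ γ ≤ q := by
    have h1 : ε ≤ q ^ γ⁻¹ := by rw [hεdef]; exact min_le_right _ _
    have h2 : ε ^ γ ≤ (q ^ γ⁻¹) ^ γ := Real.rpow_le_rpow hε0.le h1 hγ0.le
    rwa [Real.rpow_inv_rpow hq0.le (ne_of_gt hγ0)] at h2
  have hPq : P * q = min ρ (1/2) := by
    rw [hqdef, mul_div_cancel₀ _ (ne_of_gt hP0)]
  have hcMε : (1/Real.Gamma γ) * ((2*M/γ) * ε^γ) ≤ ρ := by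
    have ha : 0 ≤ (1/Real.Gamma γ) * (2*M/γ) := by positivity
    have h1 : (1/Real.Gamma γ) * (2*M/γ) * ε^γ ≤ (1/Real.Gamma γ) * (2*M/γ) * q :=
      mul_le_mul_of_nonneg_left hεγq ha
    have h2 : (1/Real.Gamma γ) * (2*M/γ) * q ≤ P * q := by
      refine mul_le_mul_of_nonneg_right ?_ hq0.le
      rw [hPdef]
      have : 0 ≤ (1/Real.Gamma γ) * (K:ℝ) * (1/γ) := by positivity
      linarith
    have h3 : P * q ≤ ρ := by rw [hPq]; exact min_le_left _ _
    calc (1/Real.Gamma γ) * ((2*M/γ) * ε^γ) = (1/Real.Gamma γ) * (2*M/γ) * ε^γ := by ring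
      _ ≤ ρ := by linarith
  have hcKε : (1/Real.Gamma γ) * ((K:ℝ) * (ε^γ/γ)) ≤ 1/2 := by
    have ha : 0 ≤ (1/Real.Gamma γ) * (K:ℝ) * (1/γ) := by positivity
    have h1 : (1/Real.Gamma γ) * (K:ℝ) * (1/γ) * ε^γ ≤ (1/Real.Gamma γ) * (K:ℝ) * (1/γ) * q :=
      mul_le_mul_of_nonneg_left hεγq ha
    have h2 : (1/Real.Gamma γ) * (K:ℝ) * (1/γ) * q ≤ P * q := by
      refine mul_le_mul_of_nonneg_right ?_ hq0.le
      rw [hPdef]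
      have : 0 ≤ (1/Real.Gamma γ) * (2*M/γ) := by positivity
      linarith
    have h3 : P * q ≤ 1/2 := by rw [hPq]; exact min_le_right _ _
    calc (1/Real.Gamma γ) * ((K:ℝ) * (ε^γ/γ)) = (1/Real.Gamma γ) * (K:ℝ) * (1/γ) * ε^γ := by
          ring
      _ ≤ 1/2 := by linarith
  set A : ℝ := T₀ + ε with hAdef
  have hA0 : 0 < A := by rw [hAdef]; linarith
  have hTA : T₀ ≤ A := by rw [hAdef]; linarith
  -- function space setup
  set X := C(↥(Icc (0:ℝ) A), ℝ) with hXdef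
  set E : X → ℝ → ℝ := fun v t => v (Set.projIcc 0 A hA0.le t) with hEdef
  have hEcont : ∀ v : X, Continuous (E v) := fun v => v.continuous.comp continuous_projIcc
  have hEeq : ∀ (v : X) (t : ℝ) (ht : t ∈ Icc (0:ℝ) A), E v t = v ⟨t, ht⟩ := by
    intro v t ht
    rw [hEdef]
    simp only [Set.projIcc_of_mem hA0.le ht]
  set Y : Set X := {v | (∀ x : ↥(Icc (0:ℝ) A), (x:ℝ) ≤ T₀ → v x = w x)
      ∧ (∀ x : ↥(Icc (0:ℝ) A), T₀ ≤ (x:ℝ) → v x ∈ Icc (b-ρ) (b+ρ))} with hYdef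
  have hYclosed : IsClosed Y := by
    have : Y = (⋂ x : ↥(Icc (0:ℝ) A), {v : X | (x:ℝ) ≤ T₀ → v x = w x})
        ∩ (⋂ x : ↥(Icc (0:ℝ) A), {v : X | T₀ ≤ (x:ℝ) → v x ∈ Icc (b-ρ) (b+ρ)}) := by
      ext v
      simp only [hYdef, mem_setOf_eq, mem_inter_iff, mem_iInter]
    rw [this]
    refine IsClosed.inter (isClosed_iInter fun x => ?_) (isClosed_iInter fun x => ?_)
    · by_cases hx : (x:ℝ) ≤ T₀
      · simp only [hx, forall_true_left]
        exact isClosed_eq (continuous_eval_const x) continuous_const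
      · have heq' : {v : X | (x:ℝ) ≤ T₀ → v x = w x} = univ :=
          eq_univ_of_forall (fun v h => absurd h hx)
        rw [heq']
        exact isClosed_univ
    · by_cases hx : T₀ ≤ (x:ℝ)
      · simp only [hx, forall_true_left]
        exact IsClosed.preimage (continuous_eval_const x) isClosed_Icc
      · have heq' : {v : X | T₀ ≤ (x:ℝ) → v x ∈ Icc (b-ρ) (b+ρ)} = univ :=
          eq_univ_of_forall (fun v h => absurd h hx)
        rw [heq']
        exact isClosed_univ
  -- membership facts
  have hvpos : ∀ v ∈ Y, ∀ x : ↥(Icc (0:ℝ) A), 0 < v x := by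
    intro v hv x
    rcases le_total ((x:ℝ)) T₀ with hx | hx
    · rw [hv.1 x hx]
      exact lt_of_lt_of_le hu₀ (hwge x ⟨x.2.1, hx⟩)
    · have := (hv.2 x hx).1
      linarith
  have hvbound : ∀ v ∈ Y, ∀ x : ↥(Icc (0:ℝ) A), |f (v x)| ≤ M := by
    intro v hv x
    rcases le_total ((x:ℝ)) T₀ with hx | hx
    · rw [hv.1 x hx]
      exact le_trans (hM₁ _ ⟨x.2.1, hx⟩) hM₁le
    · exact le_trans (hMf _ (hv.2 x hx)) hMfle
  have hfEv_cont : ∀ v ∈ Y, Continuous (fun s => f (E v s)) := by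
    intro v hv
    exact fcont.comp_continuous (hEcont v) (fun s => mem_Ioi.mpr (hvpos v hv _))
  have hfEv_bound : ∀ v ∈ Y, ∀ s : ℝ, |f (E v s)| ≤ M := fun v hv s => hvbound v hv _
  -- the real-valued integral operator
  set G : X → ℝ → ℝ := fun v t =>
    u₀ + (1/Real.Gamma γ) * ∫ s in (0:ℝ)..t, (t-s)^(γ-1) * f (E v s) with hGdef
  have hG_cont : ∀ v ∈ Y, ContinuousOn (G v) (Icc 0 A) := by
    intro v hv
    exact continuousOn_const.add (continuousOn_const.mul
      (ker_continuousOn hγ hA0.le (hfEv_cont v hv).continuousOn))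
  -- G v agrees with w below T₀
  have hGw : ∀ v ∈ Y, ∀ t : ℝ, 0 ≤ t → t ≤ T₀ → G v t = w t := by
    intro v hv t ht0 htT
    have hcongr : (∫ s in (0:ℝ)..t, (t-s)^(γ-1) * f (E v s))
        = ∫ s in (0:ℝ)..t, (t-s)^(γ-1) * f (w s) := by
      refine intervalIntegral.integral_congr (fun s hs => ?_)
      rw [uIcc_of_le ht0] at hs
      have hsA : s ∈ Icc (0:ℝ) A := ⟨hs.1, le_trans hs.2 (le_trans htT hTA)⟩
      rw [hEeq v s hsA, hv.1 ⟨s, hsA⟩ (le_trans hs.2 htT)]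
    rw [hGdef]
    simp only
    rw [hcongr, ← hweq t ⟨ht0, htT⟩]
  -- zero-extension map
  set v₀ : X := ⟨fun x => w (min (x:ℝ) T₀),
    hwc.comp_continuous ((continuous_subtype_val.min continuous_const))
      (fun x => ⟨le_min x.2.1 hT₀, min_le_right _ _⟩)⟩ with hv₀def
  have hv₀Y : v₀ ∈ Y := by
    constructor
    · intro x hx
      show w (min (x:ℝ) T₀) = w (x:ℝ)
      rw [min_eq_left hx]
    · intro x hx
      show w (min (x:ℝ) T₀) ∈ Icc (b-ρ) (b+ρ)
      rw [min_eq_right hx, ← hbdef]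
      exact ⟨by linarith, by linarith⟩
  -- the fixed point operator
  set Φ : X → X := fun v =>
    if hv : v ∈ Y then
      ⟨fun x => G v x, (hG_cont v hv).comp_continuous continuous_subtype_val (fun x => x.2)⟩
    else v₀ with hΦdef
  have hΦapp : ∀ v ∈ Y, ∀ x : ↥(Icc (0:ℝ) A), Φ v x = G v x := by
    intro v hv x
    simp only [hΦdef, dif_pos hv]
    rfl
  -- maps to
  have hmaps : MapsTo Φ Y Y := by
    intro v hv
    constructor
    · intro x hx
      rw [hΦapp v hv x]
      exact hGw v hv x x.2.1 hx
    · intro x hx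
      rw [hΦapp v hv x]
      have hbG : G v T₀ = b := by rw [hbdef]; exact hGw v hv T₀ hT₀ le_rfl
      have hhol := ker_holder hγ (A := A) (M := M) (hfEv_cont v hv).continuousOn
        (fun s _ => hfEv_bound v hv s) hT₀ hx x.2.2
      have hxε : ((x:ℝ) - T₀) ^ γ ≤ ε ^ γ := by
        refine Real.rpow_le_rpow (by linarith) ?_ hγ0.le
        have h := x.2.2
        linarith [hAdef.le, hAdef.ge]
      have hdiff : |G v x - b| ≤ ρ := by
        have habs : |G v x - b| = (1/Real.Gamma γ)
            * |(∫ s in (0:ℝ)..(x:ℝ), ((x:ℝ)-s)^(γ-1) * f (E v s))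
              - ∫ s in (0:ℝ)..T₀, (T₀-s)^(γ-1) * f (E v s)| := by
          have h' : G v x - b = (1/Real.Gamma γ)
              * ((∫ s in (0:ℝ)..(x:ℝ), ((x:ℝ)-s)^(γ-1) * f (E v s))
                - ∫ s in (0:ℝ)..T₀, (T₀-s)^(γ-1) * f (E v s)) := by
            rw [← hbG, hGdef]
            simp only
            ring
          rw [h', abs_mul, abs_of_pos hcγ]
        rw [habs]
        have h2 : (2*M/γ) * ((x:ℝ)-T₀)^γ ≤ (2*M/γ) * ε^γ :=
          mul_le_mul_of_nonneg_left hxε (by positivity)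
        have h3 := mul_le_mul_of_nonneg_left (le_trans hhol h2) hcγ.le
        calc (1/Real.Gamma γ) * |(∫ s in (0:ℝ)..(x:ℝ), ((x:ℝ)-s)^(γ-1) * f (E v s))
              - ∫ s in (0:ℝ)..T₀, (T₀-s)^(γ-1) * f (E v s)|
            ≤ (1/Real.Gamma γ) * ((2*M/γ) * ε^γ) := h3
          _ ≤ ρ := hcMε
      rw [abs_le] at hdiff
      exact ⟨by linarith [hdiff.1], by linarith [hdiff.2]⟩
  -- contraction estimate
  have hcontract : ∀ v ∈ Y, ∀ v' ∈ Y, dist (Φ v) (Φ v') ≤ (1/2) * dist v v' := by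
    intro v hv v' hv'
    have hd0 : (0:ℝ) ≤ 1/2 * dist v v' := by positivity
    rw [ContinuousMap.dist_le hd0]
    intro x
    rw [hΦapp v hv x, hΦapp v' hv' x, Real.dist_eq]
    have hGsub : G v x - G v' x = (1/Real.Gamma γ)
        * ((∫ s in (0:ℝ)..(x:ℝ), ((x:ℝ)-s)^(γ-1) * f (E v s))
          - ∫ s in (0:ℝ)..(x:ℝ), ((x:ℝ)-s)^(γ-1) * f (E v' s)) := by
      simp only [hGdef]; ring
    rcases le_total ((x:ℝ)) T₀ with hx | hx
    · have heq' : G v x = G v' x := by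
        rw [hGw v hv x x.2.1 hx, hGw v' hv' x x.2.1 hx]
      rw [heq', sub_self, abs_zero]
      exact hd0
    · have hx0 : (0:ℝ) ≤ (x:ℝ) := x.2.1
      have hxA : (x:ℝ) ≤ A := x.2.2
      have hcv : Continuous (fun s => f (E v s)) := hfEv_cont v hv
      have hcv' : Continuous (fun s => f (E v' s)) := hfEv_cont v' hv'
      have i1a : IntervalIntegrable (fun s => ((x:ℝ)-s)^(γ-1) * f (E v s)) volume 0 T₀ :=
        ker_intervalIntegrable hγ0 hcv.continuousOn
      have i1b : IntervalIntegrable (fun s => ((x:ℝ)-s)^(γ-1) * f (E v s)) volume T₀ x :=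
        ker_intervalIntegrable hγ0 hcv.continuousOn
      have i2a : IntervalIntegrable (fun s => ((x:ℝ)-s)^(γ-1) * f (E v' s)) volume 0 T₀ :=
        ker_intervalIntegrable hγ0 hcv'.continuousOn
      have i2b : IntervalIntegrable (fun s => ((x:ℝ)-s)^(γ-1) * f (E v' s)) volume T₀ x :=
        ker_intervalIntegrable hγ0 hcv'.continuousOn
      have hsplit1 : (∫ s in (0:ℝ)..(x:ℝ), ((x:ℝ)-s)^(γ-1) * f (E v s))
          = (∫ s in (0:ℝ)..T₀, ((x:ℝ)-s)^(γ-1) * f (E v s))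
            + ∫ s in T₀..(x:ℝ), ((x:ℝ)-s)^(γ-1) * f (E v s) :=
        (intervalIntegral.integral_add_adjacent_intervals i1a i1b).symm
      have hsplit2 : (∫ s in (0:ℝ)..(x:ℝ), ((x:ℝ)-s)^(γ-1) * f (E v' s))
          = (∫ s in (0:ℝ)..T₀, ((x:ℝ)-s)^(γ-1) * f (E v' s))
            + ∫ s in T₀..(x:ℝ), ((x:ℝ)-s)^(γ-1) * f (E v' s) :=
        (intervalIntegral.integral_add_adjacent_intervals i2a i2b).symm
      have hfirst : (∫ s in (0:ℝ)..T₀, ((x:ℝ)-s)^(γ-1) * f (E v s))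
          = ∫ s in (0:ℝ)..T₀, ((x:ℝ)-s)^(γ-1) * f (E v' s) := by
        refine intervalIntegral.integral_congr (fun s hs => ?_)
        rw [uIcc_of_le hT₀] at hs
        have hsA : s ∈ Icc (0:ℝ) A := ⟨hs.1, le_trans hs.2 hTA⟩
        rw [hEeq v s hsA, hEeq v' s hsA, hv.1 ⟨s, hsA⟩ hs.2, hv'.1 ⟨s, hsA⟩ hs.2]
      have hsecond : (∫ s in T₀..(x:ℝ), ((x:ℝ)-s)^(γ-1) * f (E v s))
          - (∫ s in T₀..(x:ℝ), ((x:ℝ)-s)^(γ-1) * f (E v' s))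
          = ∫ s in T₀..(x:ℝ), ((x:ℝ)-s)^(γ-1) * (f (E v s) - f (E v' s)) := by
        rw [← intervalIntegral.integral_sub i1b i2b]
        exact intervalIntegral.integral_congr (fun s _ => by ring)
      have hbnd : ∀ s ∈ Ico T₀ ((x:ℝ)), |f (E v s) - f (E v' s)| ≤ (K:ℝ) * dist v v' := by
        intro s hs
        have hsA : s ∈ Icc (0:ℝ) A := ⟨le_trans hT₀ hs.1, le_trans hs.2.le hxA⟩
        rw [hEeq v s hsA, hEeq v' s hsA]
        have hm1 : v ⟨s, hsA⟩ ∈ Icc (b-ρ) (b+ρ) := hv.2 ⟨s, hsA⟩ hs.1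
        have hm2 : v' ⟨s, hsA⟩ ∈ Icc (b-ρ) (b+ρ) := hv'.2 ⟨s, hsA⟩ hs.1
        have hlip := hK.dist_le_mul _ hm1 _ hm2
        rw [Real.dist_eq] at hlip
        refine le_trans hlip ?_
        refine mul_le_mul_of_nonneg_left ?_ K.2
        exact ContinuousMap.dist_apply_le_dist _
      have hcd : ContinuousOn (fun s => f (E v s) - f (E v' s)) (Icc T₀ ((x:ℝ))) :=
        (hcv.sub hcv').continuousOn
      have hupp := ker_integral_upper hγ0 hx le_rfl hcd hbnd
      rw [sub_self, Real.zero_rpow (ne_of_gt hγ0), sub_zero] at hupp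
      have hIdiff : (∫ s in (0:ℝ)..(x:ℝ), ((x:ℝ)-s)^(γ-1) * f (E v s))
          - (∫ s in (0:ℝ)..(x:ℝ), ((x:ℝ)-s)^(γ-1) * f (E v' s))
          = ∫ s in T₀..(x:ℝ), ((x:ℝ)-s)^(γ-1) * (f (E v s) - f (E v' s)) := by
        rw [hsplit1, hsplit2, hfirst, ← hsecond]
        ring
      have hxε : ((x:ℝ)-T₀)^γ ≤ ε^γ :=
        Real.rpow_le_rpow (by linarith) (by linarith [hAdef.le, hAdef.ge]) hγ0.le
      have hd : (0:ℝ) ≤ dist v v' := dist_nonneg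
      have e1 : ((x:ℝ)-T₀)^γ/γ ≤ ε^γ/γ := by
        have h' := mul_le_mul_of_nonneg_right hxε (le_of_lt (one_div_pos.mpr hγ0))
        calc ((x:ℝ)-T₀)^γ/γ = ((x:ℝ)-T₀)^γ * (1/γ) := by ring
          _ ≤ ε^γ * (1/γ) := h'
          _ = ε^γ/γ := by ring
      calc |G v x - G v' x|
          = (1/Real.Gamma γ) * |(∫ s in (0:ℝ)..(x:ℝ), ((x:ℝ)-s)^(γ-1) * f (E v s))
            - ∫ s in (0:ℝ)..(x:ℝ), ((x:ℝ)-s)^(γ-1) * f (E v' s)| := by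
            rw [hGsub, abs_mul, abs_of_pos hcγ]
        _ = (1/Real.Gamma γ)
            * |∫ s in T₀..(x:ℝ), ((x:ℝ)-s)^(γ-1) * (f (E v s) - f (E v' s))| := by
            rw [hIdiff]
        _ ≤ (1/Real.Gamma γ) * ((K:ℝ) * dist v v' * (((x:ℝ)-T₀)^γ/γ)) :=
            mul_le_mul_of_nonneg_left hupp hcγ.le
        _ ≤ (1/Real.Gamma γ) * ((K:ℝ) * dist v v' * (ε^γ/γ)) := by
            refine mul_le_mul_of_nonneg_left ?_ hcγ.le
            refine mul_le_mul_of_nonneg_left e1 ?_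
            positivity
        _ = ((1/Real.Gamma γ) * ((K:ℝ) * (ε^γ/γ))) * dist v v' := by ring
        _ ≤ (1/2) * dist v v' := mul_le_mul_of_nonneg_right hcKε hd
  -- Banach fixed point
  have hcontr : ContractingWith (1/2 : NNReal) (hmaps.restrict Φ Y Y) := by
    constructor
    · rw [← NNReal.coe_lt_coe]
      norm_num
    · refine LipschitzWith.of_dist_le_mul (fun a a' => ?_)
      have h' := hcontract a.1 a.2 a'.1 a'.2
      have hc1 : ((1/2 : NNReal) : ℝ) = 1/2 := by norm_num
      rw [Subtype.dist_eq, Subtype.dist_eq, MapsTo.val_restrict_apply, MapsTo.val_restrict_apply,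
        hc1]
      exact h'
  obtain ⟨y, hyY, hyfix, -, -⟩ := ContractingWith.exists_fixedPoint' hYclosed.isComplete hmaps
    hcontr hv₀Y (edist_ne_top _ _)
  have hyeq : ∀ x : ↥(Icc (0:ℝ) A), y x = G y x :=
    fun x => (ContinuousMap.congr_fun hyfix x).symm.trans (hΦapp y hyY x)
  -- assemble the solution
  refine ⟨ε, hε0, E y, ?_, ?_, ?_, ?_⟩
  · have h0A : (0:ℝ) ∈ Icc (0:ℝ) A := ⟨le_rfl, hA0.le⟩
    rw [hEeq y 0 h0A, hyY.1 ⟨0, h0A⟩ hT₀]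
    exact hw0
  · exact (hEcont y).continuousOn
  · intro t ht0 htA
    exact mem_Ioi.mpr (hvpos y hyY _)
  · intro t ht0 htA
    have htA' : t < T₀ + ε := by
      rwa [ENNReal.ofReal_lt_ofReal_iff (by linarith)] at htA
    have htmem : t ∈ Icc (0:ℝ) A := ⟨ht0, by linarith [hAdef.le, hAdef.ge]⟩
    rw [hEeq y t htmem, hyeq ⟨t, htmem⟩]

end extend


section main

variable {γ u₀ : ℝ} {f u : ℝ → ℝ}

lemma sol_ge (hγ : γ ∈ Ioo (0:ℝ) 1) (hmono : MonotoneOn f (Ioi 0)) (hu₀ : 0 < u₀)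
    (hfu₀ : 0 < f u₀) (fcont : ContinuousOn f (Ioi 0)) {A : ℝ} (hA : 0 < A)
    (hc : ContinuousOn u (Ico 0 A)) (h0 : u 0 = u₀)
    (hpos : ∀ t ∈ Ico (0:ℝ) A, 0 < u t)
    (heq : ∀ t ∈ Ico (0:ℝ) A,
      u t = u₀ + (1/Real.Gamma γ) * ∫ s in (0:ℝ)..t, (t-s)^(γ-1) * f (u s)) :
    ∀ t ∈ Ico (0:ℝ) A, u₀ ≤ u t := by
  intro t ht
  have h := sol_lower hγ hmono hu₀ hfu₀ fcont hA hc h0 hpos heq t ht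
  have h1 : 0 ≤ (t:ℝ)^γ := Real.rpow_nonneg ht.1 _
  have hcγ : 0 < 1/Real.Gamma γ := by
    have := Real.Gamma_pos_of_pos hγ.1
    positivity
  have h2 : 0 ≤ (1/Real.Gamma γ) * (f u₀ * (t^γ/γ)) :=
    mul_nonneg hcγ.le (mul_nonneg hfu₀.le (div_nonneg h1 hγ.1.le))
  linarith

theorem stmt6 (γ u₀ : ℝ) (f : ℝ → ℝ) (u : ℝ → ℝ)
    (hγ : γ ∈ Set.Ioo (0:ℝ) 1)
    (hf : ∀ x ∈ Set.Ioi (0:ℝ), ∃ K : NNReal, ∃ s ∈ 𝓝[Set.Ioi (0:ℝ)] x, LipschitzOnWith K f s)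
    (hmono : MonotoneOn f (Set.Ioi 0))
    (hu₀ : 0 < u₀) (hfu₀ : 0 < f u₀)
    (hu : IsSolUpTo γ f (Set.Ioi 0) u₀ u (maxTime γ f (Set.Ioi 0) u₀)) :
    MonotoneOn u {t : ℝ | 0 < t ∧ ENNReal.ofReal t < maxTime γ f (Set.Ioi 0) u₀} ∧
    (maxTime γ f (Set.Ioi 0) u₀ = ⊤ → Tendsto u atTop atTop) ∧
    (maxTime γ f (Set.Ioi 0) u₀ ≠ ⊤ →
      Tendsto u (𝓝[<] (maxTime γ f (Set.Ioi 0) u₀).toReal) atTop) := by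
  have hγ0 := hγ.1
  have fcont : ContinuousOn f (Ioi 0) := lip_continuousOn hf
  have hcγ : 0 < 1/Real.Gamma γ := by
    have := Real.Gamma_pos_of_pos hγ0
    positivity
  set Tb := maxTime γ f (Set.Ioi 0) u₀ with hTbdef
  -- step 1 : Tb > 0 via local existence from the trivial data at T₀ = 0
  have hTb0 : 0 < Tb := by
    have hex := extend_sol (T₀ := 0) (w := fun _ => u₀) hγ hf hu₀ le_rfl
      continuousOn_const rfl (fun t _ => le_rfl) ?_
    · obtain ⟨ε₀, hε₀, v, hv⟩ := hex
      have h1 : ENNReal.ofReal (0 + ε₀) ≤ Tb := le_sSup ⟨v, hv⟩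
      refine lt_of_lt_of_le ?_ h1
      rw [zero_add]
      exact ENNReal.ofReal_pos.mpr hε₀
    · intro t ht
      have ht0 : t = 0 := le_antisymm ht.2 ht.1
      subst ht0
      rw [intervalIntegral.integral_same, mul_zero, add_zero]
  obtain ⟨hu0, hucont, humem, hueq⟩ := hu
  by_cases htop : Tb = ⊤
  · -- infinite existence time
    have hltT : ∀ t : ℝ, ENNReal.ofReal t < Tb := fun t => by
      rw [htop]; exact ENNReal.ofReal_lt_top
    have hsub : ∀ A : ℝ, Ico (0:ℝ) A ⊆ {t : ℝ | 0 ≤ t ∧ ENNReal.ofReal t < Tb} :=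
      fun A t ht => ⟨ht.1, hltT t⟩
    have hcA : ∀ A : ℝ, ContinuousOn u (Ico 0 A) := fun A => hucont.mono (hsub A)
    have hposA : ∀ A : ℝ, ∀ t ∈ Ico (0:ℝ) A, 0 < u t :=
      fun A t ht => humem t ht.1 (hltT t)
    have heqA : ∀ A : ℝ, ∀ t ∈ Ico (0:ℝ) A,
        u t = u₀ + (1/Real.Gamma γ) * ∫ s in (0:ℝ)..t, (t-s)^(γ-1) * f (u s) :=
      fun A t ht => hueq t ht.1 (hltT t)
    refine ⟨?_, ?_, ?_⟩
    · intro a ha b hb hab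
      exact sol_mono hγ hmono hu₀ hfu₀ fcont (show (0:ℝ) < b+1 by
        have := hb.1; linarith) (hcA (b+1)) hu0 (hposA (b+1)) (heqA (b+1)) a b ha.1 hab
        (by linarith)
    · intro _
      have hlb : ∀ t : ℝ, 0 ≤ t → u₀ + (1/Real.Gamma γ) * (f u₀ * (t^γ/γ)) ≤ u t := by
        intro t ht0
        exact sol_lower hγ hmono hu₀ hfu₀ fcont (show (0:ℝ) < t+1 by linarith)
          (hcA (t+1)) hu0 (hposA (t+1)) (heqA (t+1)) t ⟨ht0, by linarith⟩
      have htend : Tendsto (fun t : ℝ => u₀ + (1/Real.Gamma γ) * (f u₀ * (t^γ/γ)))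
          atTop atTop := by
        have h1 : Tendsto (fun t:ℝ => t ^ γ) atTop atTop := tendsto_rpow_atTop hγ0
        have h2 : Tendsto (fun t:ℝ => ((1/Real.Gamma γ) * (f u₀ / γ)) * t ^ γ) atTop atTop :=
          h1.const_mul_atTop (mul_pos hcγ (div_pos hfu₀ hγ0))
        refine Tendsto.congr ?_ (tendsto_atTop_add_const_left _ u₀ h2)
        intro t; ring
      refine tendsto_atTop_mono' atTop ?_ htend
      filter_upwards [eventually_ge_atTop (0:ℝ)] with t ht
      exact hlb t ht
    · intro hne; exact absurd htop hne
  · -- finite maximal time : blow-up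
    obtain ⟨T, hTdef⟩ : ∃ T : ℝ, T = Tb.toReal := ⟨_, rfl⟩
    have hT0 : 0 < T := by rw [hTdef]; exact ENNReal.toReal_pos (ne_of_gt hTb0) htop
    have hofT : ENNReal.ofReal T = Tb := by rw [hTdef]; exact ENNReal.ofReal_toReal htop
    have hiff : ∀ t : ℝ, ENNReal.ofReal t < Tb ↔ t < T := by
      intro t
      rw [← hofT, ENNReal.ofReal_lt_ofReal_iff hT0]
    have hsetIco : {t : ℝ | 0 ≤ t ∧ ENNReal.ofReal t < Tb} = Ico 0 T := by
      ext t
      simp only [mem_setOf_eq, mem_Ico, hiff t]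
    have hc : ContinuousOn u (Ico 0 T) := by rw [← hsetIco]; exact hucont
    have hpos : ∀ t ∈ Ico (0:ℝ) T, 0 < u t :=
      fun t ht => humem t ht.1 ((hiff t).mpr ht.2)
    have heq : ∀ t ∈ Ico (0:ℝ) T,
        u t = u₀ + (1/Real.Gamma γ) * ∫ s in (0:ℝ)..t, (t-s)^(γ-1) * f (u s) :=
      fun t ht => hueq t ht.1 ((hiff t).mpr ht.2)
    have hmonoT := sol_mono hγ hmono hu₀ hfu₀ fcont hT0 hc hu0 hpos heq
    have hge := sol_ge hγ hmono hu₀ hfu₀ fcont hT0 hc hu0 hpos heq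
    refine ⟨?_, ?_, ?_⟩
    · intro a ha b hb hab
      exact hmonoT a b ha.1 hab ((hiff b).mp hb.2)
    · intro h; exact absurd h htop
    · intro _
      rw [← hTdef]
      by_cases hbdd : BddAbove (u '' Ico 0 T)
      · exfalso
        -- construct an extension, contradicting maximality
        obtain ⟨L, hLdef⟩ : ∃ L : ℝ, L = sSup ((fun t => u (max t (T/2))) '' Iio T) := ⟨_, rfl⟩
        have himsub : (fun t => u (max t (T/2))) '' Iio T ⊆ u '' Ico 0 T := by
          rintro y ⟨t, ht, rfl⟩
          exact ⟨max t (T/2), ⟨le_trans (by linarith) (le_max_right _ _),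
            max_lt ht (by linarith)⟩, rfl⟩
        have hbdd' : BddAbove ((fun t => u (max t (T/2))) '' Iio T) := hbdd.mono himsub
        have hmono' : MonotoneOn (fun t => u (max t (T/2))) (Iio T) := by
          intro s hs s' hs' hss
          exact hmonoT _ _ (lt_of_lt_of_le (by linarith) (le_max_right _ _))
            (max_le_max hss le_rfl) (max_lt hs' (by linarith))
        have htendsto' : Tendsto (fun t => u (max t (T/2))) (𝓝[<] T) (𝓝 L) := by
          rw [hLdef]
          exact hmono'.tendsto_nhdsLT hbdd'
        have hTev : (fun t => u (max t (T/2))) =ᶠ[𝓝[<] T] u := by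
          filter_upwards [Ioo_mem_nhdsLT (show T/2 < T by linarith)] with t htm
          rw [max_eq_left htm.1.le]
        have htendsu : Tendsto u (𝓝[<] T) (𝓝 L) := htendsto'.congr' hTev
        classical
        obtain ⟨w, hwdef⟩ : ∃ w : ℝ → ℝ, w = fun t => if t < T then u t else L := ⟨_, rfl⟩
        have hwEqu : ∀ t, t < T → w t = u t := fun t ht => by rw [hwdef]; exact if_pos ht
        have hwT : w T = L := by rw [hwdef]; exact if_neg (lt_irrefl T)
        have hLge : u (T/2) ≤ L := by
          have hmem : u (max (T/2) (T/2)) ∈ (fun t => u (max t (T/2))) '' Iio T :=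
            ⟨T/2, mem_Iio.mpr (by linarith), rfl⟩
          have hL1 : u (max (T/2) (T/2)) ≤ L := by rw [hLdef]; exact le_csSup hbdd' hmem
          rwa [max_self] at hL1
        have hwgeIcc : ∀ t ∈ Icc (0:ℝ) T, u₀ ≤ w t := by
          intro t ht
          rcases lt_or_eq_of_le ht.2 with hlt | heqT
          · rw [hwEqu t hlt]; exact hge t ⟨ht.1, hlt⟩
          · rw [heqT, hwT]
            exact le_trans (hge (T/2) ⟨by linarith, by linarith⟩) hLge
        have hw0 : w 0 = u₀ := by rw [hwEqu 0 hT0, hu0]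
        -- continuity of w on [0, T]
        have hIcoTendsto : Tendsto w (𝓝[Ico 0 T] T) (𝓝 L) := by
          have h1 : Tendsto u (𝓝[Ico 0 T] T) (𝓝 L) :=
            htendsu.mono_left (nhdsWithin_mono _ (fun z hz => hz.2))
          refine h1.congr' ?_
          filter_upwards [eventually_mem_nhdsWithin] with z hz
          exact (hwEqu z hz.2).symm
        have hwcont : ContinuousOn w (Icc 0 T) := by
          intro t ht
          rcases lt_or_eq_of_le ht.2 with hlt | heqT
          · have hIcoMem : Ico (0:ℝ) T ∈ 𝓝[Icc 0 T] t :=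
              mem_nhdsWithin.mpr ⟨Iio T, isOpen_Iio, hlt, fun z hz => ⟨hz.2.1, hz.1⟩⟩
            have hCWA : ContinuousWithinAt u (Ico 0 T) t := hc t ⟨ht.1, hlt⟩
            have hCWAw : ContinuousWithinAt w (Ico 0 T) t :=
              hCWA.congr (fun y hy => hwEqu y hy.2) (hwEqu t hlt)
            exact hCWAw.mono_of_mem_nhdsWithin hIcoMem
          · rw [heqT]
            show Tendsto w (𝓝[Icc 0 T] T) (𝓝 (w T))
            rw [hwT, show Icc (0:ℝ) T = Ico 0 T ∪ {T} from (Ico_union_right hT0.le).symm,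
              nhdsWithin_union, tendsto_sup]
            constructor
            · exact hIcoTendsto
            · rw [nhdsWithin_singleton]
              have := tendsto_pure_nhds w T
              rwa [hwT] at this
        -- equation for w on [0, T)
        have hweqIco : ∀ t ∈ Ico (0:ℝ) T,
            w t = u₀ + (1/Real.Gamma γ) * ∫ s in (0:ℝ)..t, (t-s)^(γ-1) * f (w s) := by
          intro t ht
          rw [hwEqu t ht.2, heq t ht]
          congr 1
          congr 1
          refine intervalIntegral.integral_congr (fun s hs => ?_)
          rw [uIcc_of_le ht.1] at hs
          rw [hwEqu s (lt_of_le_of_lt hs.2 ht.2)]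
        have hwpos : ∀ t ∈ Icc (0:ℝ) T, w t ∈ Ioi (0:ℝ) :=
          fun t ht => mem_Ioi.mpr (lt_of_lt_of_le hu₀ (hwgeIcc t ht))
        have hfwc : ContinuousOn (fun s => f (w s)) (Icc 0 T) := fcont.comp hwcont hwpos
        have hGc := ker_continuousOn hγ hT0.le hfwc
        -- equation at the endpoint by passing to the limit
        have hweqT : w T = u₀ + (1/Real.Gamma γ) * ∫ s in (0:ℝ)..T, (T-s)^(γ-1) * f (w s) := by
          haveI hne2 : (𝓝[Ico 0 T] T).NeBot := by
            refine mem_closure_iff_nhdsWithin_neBot.mp ?_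
            rw [closure_Ico (ne_of_gt hT0).symm]
            exact ⟨hT0.le, le_rfl⟩
          have hrhs : Tendsto (fun τ => u₀ + (1/Real.Gamma γ)
              * ∫ s in (0:ℝ)..τ, (τ-s)^(γ-1) * f (w s)) (𝓝[Ico 0 T] T)
              (𝓝 (u₀ + (1/Real.Gamma γ) * ∫ s in (0:ℝ)..T, (T-s)^(γ-1) * f (w s))) := by
            have hCWA : ContinuousWithinAt
                (fun τ => ∫ s in (0:ℝ)..τ, (τ-s)^(γ-1) * f (w s)) (Icc 0 T) T :=
              hGc T ⟨hT0.le, le_rfl⟩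
            exact ((hCWA.mono_left (nhdsWithin_mono _ Ico_subset_Icc_self)).const_mul
              (1/Real.Gamma γ)).const_add u₀
          have hagree : w =ᶠ[𝓝[Ico 0 T] T] (fun τ => u₀ + (1/Real.Gamma γ)
              * ∫ s in (0:ℝ)..τ, (τ-s)^(γ-1) * f (w s)) := by
            filter_upwards [eventually_mem_nhdsWithin] with τ hτ
            exact hweqIco τ hτ
          have := tendsto_nhds_unique (hIcoTendsto.congr' hagree) hrhs
          rw [hwT]
          exact this
        have hweqIcc : ∀ t ∈ Icc (0:ℝ) T,
            w t = u₀ + (1/Real.Gamma γ) * ∫ s in (0:ℝ)..t, (t-s)^(γ-1) * f (w s) := by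
          intro t ht
          rcases lt_or_eq_of_le ht.2 with hlt | heqT
          · exact hweqIco t ⟨ht.1, hlt⟩
          · rw [heqT]; exact hweqT
        obtain ⟨ε, hε, v, hv⟩ := extend_sol hγ hf hu₀ hT0.le hwcont hw0 hwgeIcc hweqIcc
        have hle : ENNReal.ofReal (T + ε) ≤ Tb := le_sSup ⟨v, hv⟩
        have hlt2 : Tb < ENNReal.ofReal (T + ε) := by
          rw [← hofT]
          exact (ENNReal.ofReal_lt_ofReal_iff (by linarith)).mpr (by linarith)
        exact absurd hle (not_le.mpr hlt2)
      · -- unbounded : tendsto atTop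
        rw [tendsto_atTop]
        intro C
        obtain ⟨yv, hyv, hCy⟩ := not_bddAbove_iff.mp hbdd C
        obtain ⟨x, hx, rfl⟩ := hyv
        have hrT : max x (T/2) < T := max_lt hx.2 (by linarith)
        filter_upwards [Ioo_mem_nhdsLT hrT] with t htmem
        have hxt : x ≤ t := le_trans (le_max_left _ _) htmem.1.le
        have htT : t < T := htmem.2
        have ht0 : 0 < t := lt_of_le_of_lt (by linarith : (0:ℝ) ≤ T/2)
          (lt_of_le_of_lt (le_max_right _ _) htmem.1)
        have hxut : u x ≤ u t := by
          rcases eq_or_lt_of_le hx.1 with h0x | h0x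
          · rw [← h0x, hu0]
            exact hge t ⟨ht0.le, htT⟩
          · exact hmonoT x t h0x hxt htT
        linarith


end main
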